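/- Let I and J be two homogeneous ideals of a graded commutative 2-ring R. Then the categorical product I∘J, consisting of all finite sums s₁∘t₁ + … + sₙ∘tₙ of composites with sᵢ ∈ I and tᵢ ∈ J, coincides with the tensor product I⊗J, the homogeneous ideal generated by all morphisms s ⊗ t with s ∈ I and t ∈ J. In particular, denoting this common ideal by IJ, one has IJ = JI. -/

import Mathlib

open CategoryTheory CategoryTheory.Limits CategoryTheory.MonoidalCategory

universe w v u v' u' v'' u''

/-- A *graded commutative 2-ring*: an essentially small preadditive symmetric monoidal
category whose tensor product is additive in each variable and in which every object
is invertible for the tensor product. -/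
class GradedComm2Ring (C : Type u) [Category.{v} C] [Preadditive C] [MonoidalCategory C]
    [SymmetricCategory C] [MonoidalPreadditive C] : Prop where
  essentiallySmall : EssentiallySmall.{v} C
  invertible : ∀ g : C, ∃ g' : C, Nonempty (g ⊗ g' ≅ 𝟙_ C)
section IdealDef

variable (C : Type u) [Category.{v} C] [Preadditive C] [MonoidalCategory C]

/-- A *homogeneous ideal* of a graded commutative 2-ring: a family of subgroups
`I(g,h) ⊆ Hom(g,h)` closed under composition with arbitrary morphisms on either side
and under tensoring with arbitrary morphisms on either side. -/
structure HomIdeal where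
  carrier : ∀ g h : C, AddSubgroup (g ⟶ h)
  comp_left : ∀ {g h h' : C} (r : g ⟶ h) (s : h ⟶ h'),
      r ∈ carrier g h → r ≫ s ∈ carrier g h'
  comp_right : ∀ {g' g h : C} (t : g' ⟶ g) (r : g ⟶ h),
      r ∈ carrier g h → t ≫ r ∈ carrier g' h
  tensor_left : ∀ {g h g' h' : C} (s : g' ⟶ h') (r : g ⟶ h),
      r ∈ carrier g h → (s ⊗ₘ r) ∈ carrier (g' ⊗ g) (h' ⊗ h)
  tensor_right : ∀ {g h g' h' : C} (r : g ⟶ h) (s : g' ⟶ h'),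
      r ∈ carrier g h → (r ⊗ₘ s) ∈ carrier (g ⊗ g') (h ⊗ h')

variable {C}

namespace HomIdeal

instance : PartialOrder (HomIdeal C) where
  le I J := ∀ g h : C, I.carrier g h ≤ J.carrier g h
  le_refl I g h := le_rfl
  le_trans I J K h₁ h₂ g h := (h₁ g h).trans (h₂ g h)
  le_antisymm I J h₁ h₂ := by
    cases I; cases J
    congr
    funext g h
    exact le_antisymm (h₁ g h) (h₂ g h)

/-- A homogeneous ideal is *proper* if it contains no identity morphism. -/
def IsProper (I : HomIdeal C) : Prop := ∀ g : C, 𝟙 g ∉ I.carrier g g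

/-- A proper homogeneous ideal is *prime* if whenever a composite belongs to it, one
of the factors belongs to it. -/
structure IsPrime (I : HomIdeal C) : Prop where
  isProper : I.IsProper
  mem_or_mem : ∀ {g h l : C} (r : g ⟶ h) (s : h ⟶ l),
      r ≫ s ∈ I.carrier g l → r ∈ I.carrier g h ∨ s ∈ I.carrier h l

end HomIdeal

end IdealDef

section
variable {C : Type u} [Category.{v} C] [Preadditive C] [MonoidalCategory C]

/-- Membership in the categorical product `I ∘ J` of two homogeneous ideals: the
subgroup of `Hom(g',h')` generated by composites `t ≫ s` (i.e. `s ∘ t`) with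
`s ∈ I` and `t ∈ J`; its elements are exactly the finite sums of such composites. -/
def MemCompProd (I J : HomIdeal C) {g' h' : C} (f : g' ⟶ h') : Prop :=
  f ∈ AddSubgroup.closure {f : g' ⟶ h' | ∃ (m : C) (t : g' ⟶ m) (s : m ⟶ h'),
    t ∈ J.carrier g' m ∧ s ∈ I.carrier m h' ∧ f = t ≫ s}

/-- Membership in the tensor product `I ⊗ J` of two homogeneous ideals: the
homogeneous ideal generated by the morphisms `s ⊗ t` with `s ∈ I` and `t ∈ J`. -/
def MemTensorProd (I J : HomIdeal C) {g' h' : C} (f : g' ⟶ h') : Prop :=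
  ∀ K : HomIdeal C,
    (∀ {a b c d : C} (s : a ⟶ b) (t : c ⟶ d),
      s ∈ I.carrier a b → t ∈ J.carrier c d → (s ⊗ₘ t) ∈ K.carrier (a ⊗ c) (b ⊗ d)) →
    f ∈ K.carrier g' h'

end


section HelperLemmas

open AddSubgroup

lemma aux_map_closure {G H : Type*} [AddGroup G] [AddGroup H] (φ : G →+ H)
    {S : Set G} {T : Set H} (h : ∀ x ∈ S, φ x ∈ closure T) {x : G}
    (hx : x ∈ closure S) : φ x ∈ closure T :=
  (AddSubgroup.closure_le ((closure T).comap φ)).2 h hx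

variable {C : Type u} [Category.{v} C] [Preadditive C] [MonoidalCategory C]

/-- The key coherence identity. -/
lemma aux_key [BraidedCategory C] {m m' : C} (e : m ⊗ m' ≅ 𝟙_ C)
    {g' h' : C} (t : g' ⟶ m) (s₀ : m ⟶ h') :
    ((ρ_ g').inv ≫ (g' ◁ e.inv) ≫ (α_ g' m m').inv ≫ ((β_ g' m).hom ▷ m')) ≫
      ((s₀ ⊗ₘ t) ⊗ₘ 𝟙 m') ≫ ((α_ h' m m').hom ≫ (h' ◁ e.hom) ≫ (ρ_ h').hom)
    = t ≫ ((ρ_ m).inv ≫ (m ◁ e.inv) ≫ (α_ m m m').inv ≫ ((β_ m m).hom ▷ m') ≫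
        (α_ m m m').hom ≫ (m ◁ e.hom) ≫ (ρ_ m).hom) ≫ s₀ := by
  simp only [MonoidalCategory.tensorHom_def, comp_whiskerRight, MonoidalCategory.whiskerLeft_id,
    Category.comp_id, Category.id_comp, Category.assoc]
  slice_lhs 4 5 => rw [← comp_whiskerRight, ← BraidedCategory.braiding_naturality_right,
    comp_whiskerRight]
  slice_lhs 5 6 => rw [← comp_whiskerRight, ← BraidedCategory.braiding_naturality_left,
    comp_whiskerRight]
  slice_lhs 4 5 => rw [← comp_whiskerRight, whisker_exchange, comp_whiskerRight]
  slice_lhs 3 4 => rw [← associator_inv_naturality_left]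
  slice_lhs 2 3 => rw [whisker_exchange]
  slice_lhs 1 2 => rw [← rightUnitor_inv_naturality]
  slice_lhs 5 6 => rw [← comp_whiskerRight, BraidedCategory.braiding_naturality_right,
    comp_whiskerRight]
  slice_lhs 6 7 => rw [associator_naturality_left]
  slice_lhs 7 8 => rw [← whisker_exchange]
  all_goals simp

variable [MonoidalPreadditive C]

/-- The categorical product `I ∘ J` as a homogeneous ideal. -/
def compIdeal (I J : HomIdeal C) : HomIdeal C where
  carrier g h := AddSubgroup.closure {f : g ⟶ h | ∃ (m : C) (t : g ⟶ m) (s : m ⟶ h),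
    t ∈ J.carrier g m ∧ s ∈ I.carrier m h ∧ f = t ≫ s}
  comp_left {g h h'} r x hr := by
    refine aux_map_closure (AddMonoidHom.mk' (fun f => f ≫ x)
      (fun a b => Preadditive.add_comp _ _ _ _ _ _)) ?_ hr
    rintro f ⟨m, t, s, ht, hs, rfl⟩
    exact subset_closure ⟨m, t, s ≫ x, ht, I.comp_left s x hs, by simp⟩
  comp_right {g'' g h} x r hr := by
    refine aux_map_closure (AddMonoidHom.mk' (fun f => x ≫ f)
      (fun a b => Preadditive.comp_add _ _ _ _ _ _)) ?_ hr
    rintro f ⟨m, t, s, ht, hs, rfl⟩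
    exact subset_closure ⟨m, x ≫ t, s, J.comp_right x t ht, hs, by simp⟩
  tensor_left {g h g'' h''} x r hr := by
    refine aux_map_closure (AddMonoidHom.mk' (fun f => x ⊗ₘ f)
      (fun a b => MonoidalPreadditive.tensor_add _ _ _)) ?_ hr
    rintro f ⟨m, t, s, ht, hs, rfl⟩
    exact subset_closure ⟨h'' ⊗ m, x ⊗ₘ t, 𝟙 h'' ⊗ₘ s, J.tensor_left x t ht,
      I.tensor_left (𝟙 h'') s hs, by simp [MonoidalCategory.tensorHom_def, MonoidalCategory.whiskerLeft_comp, Category.assoc]⟩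
  tensor_right {g h g'' h''} r x hr := by
    refine aux_map_closure (AddMonoidHom.mk' (fun f => f ⊗ₘ x)
      (fun a b => MonoidalPreadditive.add_tensor _ _ _)) ?_ hr
    rintro f ⟨m, t, s, ht, hs, rfl⟩
    exact subset_closure ⟨m ⊗ h'', t ⊗ₘ x, s ⊗ₘ 𝟙 h'', J.tensor_right t x ht,
      I.tensor_right s (𝟙 h'') hs, by simp [MonoidalCategory.tensorHom_def, comp_whiskerRight, whisker_exchange, Category.assoc]⟩

lemma aux_tensor_le_comp (I J : HomIdeal C) {g' h' : C} {f : g' ⟶ h'}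
    (hf : MemTensorProd I J f) : MemCompProd I J f := by
  refine hf (compIdeal I J) ?_
  intro a b c d s t hs ht
  refine subset_closure ⟨a ⊗ d, 𝟙 a ⊗ₘ t, s ⊗ₘ 𝟙 d, J.tensor_left (𝟙 a) t ht,
    I.tensor_right s (𝟙 d) hs, by simp only [id_tensorHom, tensorHom_id]; exact tensorHom_def' s t⟩

lemma aux_tensor_symm [SymmetricCategory C] (I J : HomIdeal C) {g' h' : C} {f : g' ⟶ h'}
    (hf : MemTensorProd I J f) : MemTensorProd J I f := by
  intro K hK
  refine hf K ?_
  intro a b c d s t hs ht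
  have h1 : (t ⊗ₘ s) ∈ K.carrier (c ⊗ a) (d ⊗ b) := hK t s ht hs
  have h2 : (β_ a c).hom ≫ ((t ⊗ₘ s) ≫ (β_ d b).hom) ∈ K.carrier (a ⊗ c) (b ⊗ d) :=
    K.comp_right _ _ (K.comp_left _ _ h1)
  have h3 : (s ⊗ₘ t) = (β_ a c).hom ≫ ((t ⊗ₘ s) ≫ (β_ d b).hom) := by
    rw [BraidedCategory.braiding_naturality]
    simp
  rwa [h3]

lemma aux_comp_le_tensor [SymmetricCategory C] [GradedComm2Ring C]
    (I J : HomIdeal C) {g' h' : C} {f : g' ⟶ h'}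
    (hf : MemCompProd I J f) : MemTensorProd I J f := by
  intro K hK
  refine (AddSubgroup.closure_le (K.carrier g' h')).2 ?_ hf
  rintro f₀ ⟨m, t, s, ht, hs, rfl⟩
  obtain ⟨m', ⟨e⟩⟩ := GradedComm2Ring.invertible (C := C) m
  let θ : m ≅ m := (ρ_ m).symm ≪≫ whiskerLeftIso m e.symm ≪≫ (α_ m m m').symm ≪≫
    whiskerRightIso (β_ m m) m' ≪≫ (α_ m m m') ≪≫ whiskerLeftIso m e ≪≫ (ρ_ m)
  have hθ : θ.hom = (ρ_ m).inv ≫ (m ◁ e.inv) ≫ (α_ m m m').inv ≫ ((β_ m m).hom ▷ m') ≫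
      (α_ m m m').hom ≫ (m ◁ e.hom) ≫ (ρ_ m).hom := by
    simp [θ]
  have hs₁ : θ.inv ≫ s ∈ I.carrier m h' := I.comp_right θ.inv s hs
  have h1 : ((θ.inv ≫ s) ⊗ₘ t) ∈ K.carrier (m ⊗ g') (h' ⊗ m) := hK _ t hs₁ ht
  have h2 : (((θ.inv ≫ s) ⊗ₘ t) ⊗ₘ 𝟙 m') ∈ K.carrier ((m ⊗ g') ⊗ m') ((h' ⊗ m) ⊗ m') :=
    K.tensor_right _ (𝟙 m') h1
  have h3 : ((ρ_ g').inv ≫ (g' ◁ e.inv) ≫ (α_ g' m m').inv ≫ ((β_ g' m).hom ▷ m')) ≫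
      (((θ.inv ≫ s) ⊗ₘ t) ⊗ₘ 𝟙 m') ≫ ((α_ h' m m').hom ≫ (h' ◁ e.hom) ≫ (ρ_ h').hom) ∈
      K.carrier g' h' :=
    K.comp_right _ _ (K.comp_left _ _ h2)
  have h4 : ((ρ_ g').inv ≫ (g' ◁ e.inv) ≫ (α_ g' m m').inv ≫ ((β_ g' m).hom ▷ m')) ≫
      (((θ.inv ≫ s) ⊗ₘ t) ⊗ₘ 𝟙 m') ≫ ((α_ h' m m').hom ≫ (h' ◁ e.hom) ≫ (ρ_ h').hom)
      = t ≫ s := by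
    rw [aux_key e t (θ.inv ≫ s), ← hθ, Iso.hom_inv_id_assoc]
  rwa [h4] at h3

end HelperLemmas

/-- For homogeneous ideals `I`, `J` of a graded commutative 2-ring,
the categorical product `I ∘ J` (finite sums of composites `sᵢ ∘ tᵢ`, `sᵢ ∈ I`,
`tᵢ ∈ J`) coincides with the tensor product `I ⊗ J` (the homogeneous ideal generated
by the `s ⊗ t`); in particular the common ideal `IJ` satisfies `IJ = JI`. -/
theorem compProd_eq_tensorProd
    {C : Type u} [Category.{v} C] [Preadditive C] [MonoidalCategory C]
    [SymmetricCategory C] [MonoidalPreadditive C] [GradedComm2Ring C]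
    (I J : HomIdeal C) {g' h' : C} (f : g' ⟶ h') :
    (MemCompProd I J f ↔ MemTensorProd I J f) ∧
    (MemCompProd I J f ↔ MemCompProd J I f) := by
  constructor
  · exact ⟨aux_comp_le_tensor I J, aux_tensor_le_comp I J⟩
  · constructor
    · intro h
      exact aux_tensor_le_comp J I (aux_tensor_symm I J (aux_comp_le_tensor I J h))
    · intro h
      exact aux_tensor_le_comp I J (aux_tensor_symm J I (aux_comp_le_tensor J I h))
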